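/- Let m ∈ ℕ (m ≥ 1). The activation function Φ is even (Φ(x) = Φ(−x) for all x ∈ ℝ), strictly positive (Φ(x) > 0 for all x ∈ ℝ), strictly decreasing on (0,+∞) and strictly increasing on (−∞,0), attains its maximum Φ(0) = 1/(2·2^{1/(2m)}), and satisfies lim_{x→+∞} Φ(x) = 0 and lim_{x→−∞} Φ(x) = 0. -/

import Mathlib

open scoped BigOperators
open Real Filter

/-- The algebraic sigmoid function `φ(x) = x / (1 + x^(2m))^(1/(2m))`. -/
noncomputable def phi (m : ℕ) (x : ℝ) : ℝ :=
  x / (1 + x ^ (2 * m)) ^ ((1 : ℝ) / (2 * m))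

/-- The activation function `Φ(x) = (φ(x+1) - φ(x-1))/4`. -/
noncomputable def Phi (m : ℕ) (x : ℝ) : ℝ :=
  (phi m (x + 1) - phi m (x - 1)) / 4

lemma base_pos (m : ℕ) (x : ℝ) : 0 < 1 + x ^ (2 * m) := by
  have h : (0:ℝ) ≤ x ^ (2 * m) := by rw [pow_mul]; positivity
  linarith

lemma phi_odd (m : ℕ) (x : ℝ) : phi m (-x) = - phi m x := by
  unfold phi
  rw [Even.neg_pow (even_two_mul m), neg_div]

lemma Phi_even (m : ℕ) (x : ℝ) : Phi m x = Phi m (-x) := by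
  unfold Phi
  have h1 : -x + 1 = -(x - 1) := by ring
  have h2 : -x - 1 = -(x + 1) := by ring
  rw [h1, h2, phi_odd, phi_odd]
  ring

lemma phi_hasDerivAt (m : ℕ) (hm : 1 ≤ m) (x : ℝ) :
    HasDerivAt (phi m) ((1 + x ^ (2*m)) ^ (-(1 + (1:ℝ)/(2*m)))) x := by
  have hu : ∀ y : ℝ, 0 < 1 + y ^ (2*m) := base_pos m
  set c : ℝ := (1:ℝ)/(2*m) with hc
  clear_value c
  have h2m : (2*m : ℝ) ≠ 0 := by positivity
  have h1 : HasDerivAt (fun y : ℝ => 1 + y ^ (2*m)) ((2*m : ℕ) * x ^ (2*m - 1)) x := by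
    simpa using (hasDerivAt_pow (2*m) x).const_add 1
  have h2 : HasDerivAt (fun y : ℝ => (1 + y ^ (2*m)) ^ (-c))
      ((2*m : ℕ) * x ^ (2*m - 1) * (-c) * (1 + x ^ (2*m)) ^ (-c - 1)) x :=
    h1.rpow_const (Or.inl (hu x).ne')
  have h3 : HasDerivAt (fun y : ℝ => y * (1 + y ^ (2*m)) ^ (-c))
      (1 * (1 + x ^ (2*m)) ^ (-c) +
        x * ((2*m : ℕ) * x ^ (2*m - 1) * (-c) * (1 + x ^ (2*m)) ^ (-c - 1))) x :=
    (hasDerivAt_id x).mul h2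
  have heq : (fun y : ℝ => y * (1 + y ^ (2*m)) ^ (-c)) = phi m := by
    funext y
    unfold phi
    rw [hc, Real.rpow_neg (hu y).le]
    ring
  rw [heq] at h3
  convert h3 using 1
  have hxpow : x * x ^ (2*m - 1) = x ^ (2*m) := by
    have : 2*m - 1 + 1 = 2*m := by omega
    rw [← pow_succ', this]
  have hadd : (1 + x ^ (2*m)) ^ (-c - 1) * (1 + x ^ (2*m)) = (1 + x ^ (2*m)) ^ (-c) := by
    have h := Real.rpow_add (hu x) (-c - 1) 1
    rw [Real.rpow_one] at h
    rw [← h]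
    congr 1
    ring
  have hc1 : c * (2*(m:ℝ)) = 1 := by rw [hc]; field_simp
  have hexp : -(1 + c) = -c - 1 := by ring
  rw [hexp]
  push_cast
  linear_combination hadd + c * (2*(m:ℝ)) * ((1 + x ^ (2*m)) ^ (-c - 1)) * hxpow
    + ((1 + x ^ (2*m)) ^ (-c - 1)) * (x ^ (2*m)) * hc1

lemma Phi_hasDerivAt (m : ℕ) (hm : 1 ≤ m) (x : ℝ) :
    HasDerivAt (Phi m)
      (((1 + (x+1) ^ (2*m)) ^ (-(1 + (1:ℝ)/(2*m)))
        - (1 + (x-1) ^ (2*m)) ^ (-(1 + (1:ℝ)/(2*m)))) / 4) x := by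
  have ha : HasDerivAt (fun y : ℝ => phi m (y + 1))
      ((1 + (x+1) ^ (2*m)) ^ (-(1 + (1:ℝ)/(2*m)))) x := by
    have := (phi_hasDerivAt m hm (x+1)).comp x ((hasDerivAt_id x).add_const 1)
    simpa [Function.comp_def] using this
  have hb : HasDerivAt (fun y : ℝ => phi m (y - 1))
      ((1 + (x-1) ^ (2*m)) ^ (-(1 + (1:ℝ)/(2*m)))) x := by
    have := (phi_hasDerivAt m hm (x-1)).comp x ((hasDerivAt_id x).sub_const 1)
    simpa [Function.comp_def] using this
  exact (ha.sub hb).div_const 4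

lemma Phi_deriv_neg (m : ℕ) (hm : 1 ≤ m) {x : ℝ} (hx : 0 < x) :
    ((1 + (x+1) ^ (2*m)) ^ (-(1 + (1:ℝ)/(2*m)))
      - (1 + (x-1) ^ (2*m)) ^ (-(1 + (1:ℝ)/(2*m)))) / 4 < 0 := by
  have hlt : (x-1) ^ (2*m) < (x+1) ^ (2*m) := by
    have habs : |x - 1| < x + 1 := by
      rw [abs_lt]; constructor <;> linarith
    calc (x-1) ^ (2*m) = |x - 1| ^ (2*m) := by
          rw [← abs_pow, abs_of_nonneg (by rw [pow_mul]; positivity)]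
      _ < (x+1) ^ (2*m) := by
          exact pow_lt_pow_left₀ habs (abs_nonneg _) (by omega)
  have hneg : -(1 + (1:ℝ)/(2*m)) < 0 := by
    have : (0:ℝ) < 1/(2*m) := by positivity
    linarith
  have hr := Real.rpow_lt_rpow_of_neg
    (show (0:ℝ) < 1 + (x-1)^(2*m) from base_pos m (x-1))
    (show (1:ℝ) + (x-1)^(2*m) < 1 + (x+1)^(2*m) from by linarith) hneg
  linarith

lemma Phi_strictAntiOn_Ici (m : ℕ) (hm : 1 ≤ m) :
    StrictAntiOn (Phi m) (Set.Ici (0 : ℝ)) := by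
  apply strictAntiOn_of_deriv_neg (convex_Ici 0)
  · exact Continuous.continuousOn (by
      have : ∀ x, HasDerivAt (Phi m) _ x := Phi_hasDerivAt m hm
      exact continuous_iff_continuousAt.mpr fun x => (this x).continuousAt)
  · intro x hx
    rw [interior_Ici] at hx
    rw [(Phi_hasDerivAt m hm x).deriv]
    exact Phi_deriv_neg m hm hx

lemma phi_tendsto_atTop (m : ℕ) (hm : 1 ≤ m) :
    Tendsto (phi m) atTop (nhds 1) := by
  set c : ℝ := (1:ℝ)/(2*m) with hc
  have h1 : Tendsto (fun x : ℝ => x ^ (2*m)) atTop atTop :=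
    tendsto_pow_atTop (by omega)
  have h2 : Tendsto (fun x : ℝ => 1 + x ^ (2*m)) atTop atTop :=
    tendsto_atTop_add_const_left _ 1 h1
  have h3 : Tendsto (fun x : ℝ => 1 - (1 + x ^ (2*m))⁻¹) atTop (nhds 1) := by
    have := tendsto_const_nhds (α := ℝ) (x := (1:ℝ)) (f := atTop (α := ℝ))
    simpa using this.sub h2.inv_tendsto_atTop
  have h4 : Tendsto (fun x : ℝ => (1 - (1 + x ^ (2*m))⁻¹) ^ c) atTop (nhds 1) := by
    have hcont : ContinuousAt (fun y : ℝ => y ^ c) 1 :=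
      Real.continuousAt_rpow_const 1 c (Or.inl one_ne_zero)
    have := hcont.tendsto.comp h3
    simpa [Function.comp_def] using this
  refine h4.congr' ?_
  filter_upwards [eventually_gt_atTop (0:ℝ)] with x hx
  have hu : (0:ℝ) < 1 + x ^ (2*m) := base_pos m x
  have hxp : (0:ℝ) < x ^ (2*m) := by positivity
  have he : 1 - (1 + x ^ (2*m))⁻¹ = x ^ (2*m) / (1 + x ^ (2*m)) := by
    field_simp
    ring
  rw [he, Real.div_rpow hxp.le hu.le]
  unfold phi
  congr 1
  rw [← Real.rpow_natCast x (2*m), ← Real.rpow_mul hx.le]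
  push_cast
  rw [mul_one_div, div_self (by positivity : (2*m:ℝ) ≠ 0), Real.rpow_one]

lemma Phi_tendsto_atTop (m : ℕ) (hm : 1 ≤ m) :
    Tendsto (Phi m) atTop (nhds 0) := by
  have ha : Tendsto (fun x : ℝ => phi m (x + 1)) atTop (nhds 1) :=
    (phi_tendsto_atTop m hm).comp (tendsto_atTop_add_const_right _ 1 tendsto_id)
  have hb : Tendsto (fun x : ℝ => phi m (x - 1)) atTop (nhds 1) := by
    have := (phi_tendsto_atTop m hm).comp
      (tendsto_atTop_add_const_right atTop (-1) tendsto_id)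
    simpa [sub_eq_add_neg, Function.comp_def] using this
  have := (ha.sub hb).div_const 4
  simpa using (show Tendsto (Phi m) atTop (nhds ((1 - 1) / 4)) from this)

theorem Phi_properties (m : ℕ) (hm : 1 ≤ m) :
    (∀ x : ℝ, Phi m x = Phi m (-x)) ∧
    (∀ x : ℝ, 0 < Phi m x) ∧
    StrictAntiOn (Phi m) (Set.Ioi (0 : ℝ)) ∧
    StrictMonoOn (Phi m) (Set.Iio (0 : ℝ)) ∧
    Phi m 0 = 1 / (2 * (2 : ℝ) ^ ((1 : ℝ) / (2 * m))) ∧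
    (∀ x : ℝ, Phi m x ≤ Phi m 0) ∧
    Tendsto (Phi m) atTop (nhds 0) ∧
    Tendsto (Phi m) atBot (nhds 0) := by
  have hanti := Phi_strictAntiOn_Ici m hm
  have heven := Phi_even m
  have hphi_mono : StrictMono (phi m) := by
    apply strictMono_of_deriv_pos
    intro x
    rw [(phi_hasDerivAt m hm x).deriv]
    exact Real.rpow_pos_of_pos (base_pos m x) _
  have hpos : ∀ x : ℝ, 0 < Phi m x := by
    intro x
    have : phi m (x - 1) < phi m (x + 1) := hphi_mono (by linarith)
    unfold Phi
    linarith
  have h0 : Phi m 0 = 1 / (2 * (2 : ℝ) ^ ((1 : ℝ) / (2 * m))) := by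
    have hp1 : phi m 1 = 1 / (2:ℝ) ^ ((1:ℝ)/(2*m)) := by
      unfold phi; norm_num
    unfold Phi
    rw [show (0:ℝ) + 1 = 1 by norm_num, show (0:ℝ) - 1 = -1 by norm_num,
      phi_odd, hp1]
    ring
  have hmax : ∀ x : ℝ, Phi m x ≤ Phi m 0 := by
    intro x
    rcases lt_trichotomy x 0 with h | h | h
    · rw [heven x]
      exact (hanti (Set.self_mem_Ici) (Set.mem_Ici.mpr (by linarith)) (by linarith)).le
    · rw [h]
    · exact (hanti Set.self_mem_Ici (Set.mem_Ici.mpr h.le) h).le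
  refine ⟨heven, hpos, hanti.mono (Set.Ioi_subset_Ici_self), ?_, h0, hmax,
    Phi_tendsto_atTop m hm, ?_⟩
  · intro a ha b hb hab
    rw [heven a, heven b]
    exact hanti (Set.mem_Ici.mpr (by linarith [Set.mem_Iio.mp hb]))
      (Set.mem_Ici.mpr (by linarith [Set.mem_Iio.mp ha])) (by linarith)
  · have := (Phi_tendsto_atTop m hm).comp tendsto_neg_atBot_atTop
    exact this.congr fun x => (heven x).symm
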